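/- Let (C, R) be a weakly reversible chemical reaction network on N species whose reaction diagram has a single linkage class, and let x : [0,∞) → ℝ^N_{>0} be a trajectory of the associated non-autonomous mass-action system with bounded kinetics, with x(0) = x_0 ∈ ℝ^N_{>0}. Assume (1) x(t) is bounded in t, and (2) the ω-limit set of x(·) is either completely contained in the boundary ∂ℝ^N_{≥0} or completely contained in the open orthant ℝ^N_{>0}. Then the ω-limit set of x(·) does not intersect ∂ℝ^N_{≥0}, and the trajectory is persistent. -/

import Mathlib

open Filter

/-- A chemical reaction network on `N` species: a finite set `C ⊆ ℤ^N_{≥0}` of complexes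
and a finite set `R` of reactions `y → y'` with `y ≠ y'`, both endpoints complexes,
such that every complex takes part in at least one reaction. -/
def IsNetwork {N : ℕ} (C : Finset (Fin N → ℕ)) (R : Finset ((Fin N → ℕ) × (Fin N → ℕ))) : Prop :=
  (∀ r ∈ R, r.1 ∈ C ∧ r.2 ∈ C ∧ r.1 ≠ r.2) ∧ (∀ y ∈ C, ∃ r ∈ R, r.1 = y ∨ r.2 = y)

/-- Directed edge of the reaction diagram. -/
def dirStep {N : ℕ} (R : Finset ((Fin N → ℕ) × (Fin N → ℕ))) (a b : Fin N → ℕ) : Prop :=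
  (a, b) ∈ R

/-- Undirected edge of the reaction diagram. -/
def symStep {N : ℕ} (R : Finset ((Fin N → ℕ) × (Fin N → ℕ))) (a b : Fin N → ℕ) : Prop :=
  (a, b) ∈ R ∨ (b, a) ∈ R

/-- A network is weakly reversible when each linkage class (connected component of the
reaction diagram, ignoring directions) is strongly connected as a directed graph:
whenever `b` is reachable from `a` ignoring directions, it is reachable along
directed reactions. -/
def WeaklyReversible {N : ℕ} (R : Finset ((Fin N → ℕ) × (Fin N → ℕ))) : Prop :=
  ∀ a b, Relation.ReflTransGen (symStep R) a b → Relation.ReflTransGen (dirStep R) a b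

/-- The mass-action monomial `x^y = ∏ i, (x i)^(y i)` (with the convention `0^0 = 1`). -/
noncomputable def monom {N : ℕ} (x : Fin N → ℝ) (y : Fin N → ℕ) : ℝ := ∏ i, x i ^ y i

/-- A complex, viewed as a real vector. -/
def cv {N : ℕ} (y : Fin N → ℕ) : Fin N → ℝ := fun i => (y i : ℝ)

/-- The ω-limit set of the trajectory `x`. -/
def omegaSet {N : ℕ} (x : ℝ → Fin N → ℝ) : Set (Fin N → ℝ) :=
  {z | ∃ tn : ℕ → ℝ, Tendsto tn atTop atTop ∧ Tendsto (fun n => x (tn n)) atTop (nhds z)}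

set_option maxHeartbeats 1000000

open Topology

noncomputable def monS {N : ℕ} (Λ : Finset (Fin N)) (u : Fin N → ℝ) (y : Fin N → ℕ) : ℝ :=
  ∏ i ∈ Λ, u i ^ y i

lemma monS_pos {N : ℕ} (Λ : Finset (Fin N)) {u : Fin N → ℝ} (hu : ∀ i, 0 < u i)
    (y : Fin N → ℕ) : 0 < monS Λ u y :=
  Finset.prod_pos fun i _ => pow_pos (hu i) _

lemma log_monS {N : ℕ} (Λ : Finset (Fin N)) {u : Fin N → ℝ} (hu : ∀ i, 0 < u i)
    (y : Fin N → ℕ) :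
    Real.log (monS Λ u y) = ∑ i ∈ Λ, (y i : ℝ) * Real.log (u i) := by
  rw [monS, Real.log_prod (fun i _ => (pow_pos (hu i) _).ne')]
  simp [Real.log_pow]

lemma monom_eq_monS_mul {N : ℕ} (Λ : Finset (Fin N)) (u : Fin N → ℝ) (y : Fin N → ℕ) :
    monom u y = monS Λ u y * monS Λᶜ u y := by
  classical
  rw [monS, monS, Finset.prod_mul_prod_compl]
  rfl

lemma aux_subseq_single (f : ℕ → ℝ) (h0 : ∀ n, 0 ≤ f n) :
    ∃ φ : ℕ → ℕ, StrictMono φ ∧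
      ((∃ l, 0 ≤ l ∧ Tendsto (fun n => f (φ n)) atTop (𝓝 l)) ∨
        Tendsto (fun n => f (φ n)) atTop atTop) := by
  by_cases h : ∃ M, ∃ᶠ n in atTop, f n ≤ M
  · obtain ⟨M, hM⟩ := h
    obtain ⟨φ, hφ, hfb⟩ := Filter.extraction_of_frequently_atTop hM
    have hmem : ∀ n, (fun n => f (φ n)) n ∈ Set.Icc (0:ℝ) M := fun n => ⟨h0 _, hfb n⟩
    obtain ⟨l, hl, ψ, hψ, hlim⟩ := (isCompact_Icc (a := (0:ℝ)) (b := M)).tendsto_subseq hmem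
    exact ⟨φ ∘ ψ, hφ.comp hψ, Or.inl ⟨l, hl.1, hlim⟩⟩
  · push_neg at h
    refine ⟨id, strictMono_id, Or.inr ?_⟩
    rw [tendsto_atTop]
    intro b
    have hb := h b
    filter_upwards [hb] with n hn
    exact hn.le

lemma aux_subseq_family {ι : Type*} [DecidableEq ι] (s : Finset ι) (f : ι → ℕ → ℝ)
    (h0 : ∀ j n, 0 ≤ f j n) :
    ∃ φ : ℕ → ℕ, StrictMono φ ∧ ∀ j ∈ s,
      (∃ l, 0 ≤ l ∧ Tendsto (fun n => f j (φ n)) atTop (𝓝 l)) ∨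
        Tendsto (fun n => f j (φ n)) atTop atTop := by
  classical
  induction s using Finset.induction with
  | empty => exact ⟨id, strictMono_id, by simp⟩
  | @insert a s ha ih =>
    obtain ⟨φ, hφ, hrest⟩ := ih
    obtain ⟨ψ, hψ, hone⟩ := aux_subseq_single (fun n => f a (φ n)) (fun n => h0 _ _)
    refine ⟨φ ∘ ψ, hφ.comp hψ, ?_⟩
    intro j hj
    rcases Finset.mem_insert.1 hj with rfl | hj
    · exact hone
    · rcases hrest j hj with ⟨l, hl, hlim⟩ | hlim
      · exact Or.inl ⟨l, hl, hlim.comp hψ.tendsto_atTop⟩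
      · exact Or.inr (hlim.comp hψ.tendsto_atTop)

lemma aux_exists_max {α : Type*} (r : α → α → Prop) :
    ∀ s : Finset α, s.Nonempty → (∀ a ∈ s, ∀ b ∈ s, r a b ∨ r b a) →
      (∀ a ∈ s, ∀ b ∈ s, ∀ c ∈ s, r a b → r b c → r a c) →
      ∃ a ∈ s, ∀ b ∈ s, r a b := by
  classical
  intro s
  induction s using Finset.induction with
  | empty => intro h; simp at h
  | @insert a s ha ih =>
    intro _ htot htrans
    by_cases hs : s.Nonempty
    · obtain ⟨m, hm, hmax⟩ := ih hs
        (fun u hu v hv => htot u (by simp [hu]) v (by simp [hv]))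
        (fun u hu v hv w hw => htrans u (by simp [hu]) v (by simp [hv]) w (by simp [hw]))
      rcases htot a (by simp) m (by simp [hm]) with h1 | h1
      · refine ⟨a, by simp, ?_⟩
        intro b hb
        rcases Finset.mem_insert.1 hb with rfl | hb
        · rcases htot b (by simp) b (by simp) with h | h <;> exact h
        · exact htrans a (by simp) m (by simp [hm]) b (by simp [hb]) h1 (hmax b hb)
      · refine ⟨m, by simp [hm], ?_⟩
        intro b hb
        rcases Finset.mem_insert.1 hb with rfl | hb
        · exact h1
        · exact hmax b hb
    · rw [Finset.not_nonempty_iff_eq_empty] at hs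
      subst hs
      refine ⟨a, by simp, ?_⟩
      intro b hb
      rcases Finset.mem_insert.1 hb with rfl | hb
      · rcases htot b (by simp) b (by simp) with h | h <;> exact h
      · simp at hb

lemma aux_cross {α : Type*} {r : α → α → Prop} (P : α → Prop) {a b : α}
    (h : Relation.ReflTransGen r a b) : P a → ¬ P b → ∃ u v, r u v ∧ P u ∧ ¬ P v := by
  induction h with
  | refl => intro h1 h2; exact absurd h1 h2
  | @tail c d hac hcd ih =>
    intro h1 h2
    by_cases hP : P c
    · exact ⟨c, d, hcd, hP, h2⟩
    · exact ih h1 hP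

lemma aux_tendsto_of_monotoneOn {f : ℝ → ℝ} {T M : ℝ}
    (hm : MonotoneOn f (Set.Ici T)) (hb : ∀ t, T ≤ t → f t ≤ M) :
    ∃ L, Tendsto f atTop (𝓝 L) := by
  set g : ℝ → ℝ := fun t => f (max t T) with hg
  have hgm : Monotone g := fun s t hst =>
    hm (Set.mem_Ici.2 (le_max_right _ _)) (Set.mem_Ici.2 (le_max_right _ _)) (max_le_max hst le_rfl)
  have hgb : BddAbove (Set.range g) := ⟨M, by rintro _ ⟨t, rfl⟩; exact hb _ (le_max_right _ _)⟩
  refine ⟨⨆ t, g t, ?_⟩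
  refine (tendsto_atTop_ciSup hgm hgb).congr' ?_
  filter_upwards [eventually_ge_atTop T] with t ht
  simp [hg, max_eq_left ht]

lemma aux_xlogx_ge (u : ℝ) (hu : 0 < u) : -1 ≤ u * Real.log u - u := by
  have h := Real.log_le_sub_one_of_pos (show (0:ℝ) < u⁻¹ by positivity)
  rw [Real.log_inv] at h
  have h2 := mul_le_mul_of_nonneg_left h hu.le
  have h3 : u * u⁻¹ = 1 := mul_inv_cancel₀ hu.ne'
  nlinarith

lemma aux_xlogx_ge_sqrt (u : ℝ) (hu : 0 < u) : 2 * u - 2 * Real.sqrt u ≤ u * Real.log u := by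
  have hs : 0 < Real.sqrt u := Real.sqrt_pos.2 hu
  have h := Real.log_le_sub_one_of_pos (show (0:ℝ) < (Real.sqrt u)⁻¹ by positivity)
  rw [Real.log_inv] at h
  -- -log √u ≤ (√u)⁻¹ - 1, so log √u ≥ 1 - (√u)⁻¹
  have hlog : Real.log (Real.sqrt u) = Real.log u / 2 := Real.log_sqrt hu.le
  have h2 := mul_le_mul_of_nonneg_left h hu.le
  have h3 : u * (Real.sqrt u)⁻¹ = Real.sqrt u := by
    rw [← Real.mul_self_sqrt hu.le]
    field_simp
    rw [Real.sqrt_sq hs.le]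
  nlinarith [hlog]

lemma aux_tendsto_xlogx {β : Type*} {l : Filter β} {f : β → ℝ}
    (h0 : ∀ᶠ b in l, 0 < f b) (hlim : Tendsto f l (𝓝 0)) :
    Tendsto (fun b => f b * Real.log (f b)) l (𝓝 0) := by
  have hsqrt : Tendsto (fun b => 2 * f b - 2 * Real.sqrt (f b)) l (𝓝 0) := by
    have : Tendsto (fun b => Real.sqrt (f b)) l (𝓝 0) := by
      have := (Real.continuous_sqrt.tendsto 0).comp hlim
      simpa [Function.comp_def] using this
    have h2 := (hlim.const_mul 2).sub (this.const_mul 2)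
    simpa using h2
  have hub : ∀ᶠ b in l, f b * Real.log (f b) ≤ 0 := by
    filter_upwards [h0, hlim.eventually (eventually_le_nhds (show (0:ℝ) < 1 by norm_num))]
      with b hb hb1
    exact mul_nonpos_of_nonneg_of_nonpos hb.le (Real.log_nonpos hb.le hb1)
  have hlb : ∀ᶠ b in l, 2 * f b - 2 * Real.sqrt (f b) ≤ f b * Real.log (f b) := by
    filter_upwards [h0] with b hb
    exact aux_xlogx_ge_sqrt _ hb
  exact tendsto_of_tendsto_of_tendsto_of_le_of_le' hsqrt tendsto_const_nhds hlb hub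

lemma aux_const_of_deriv_zero {f : ℝ → ℝ} (h : ∀ t, 0 ≤ t → HasDerivAt f 0 t) :
    ∀ t, 0 ≤ t → f t = f 0 := by
  intro t ht
  have hcont : ContinuousOn f (Set.Ici 0) := fun s hs =>
    (h s hs).continuousAt.continuousWithinAt
  have hdiff : DifferentiableOn ℝ f (interior (Set.Ici (0:ℝ))) := fun s hs => by
    rw [interior_Ici] at hs
    exact (h s (le_of_lt hs)).differentiableAt.differentiableWithinAt
  have hd0 : ∀ s ∈ interior (Set.Ici (0:ℝ)), deriv f s = 0 := fun s hs => by
    rw [interior_Ici] at hs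
    exact (h s (le_of_lt hs)).deriv
  have hmono := monotoneOn_of_deriv_nonneg (convex_Ici 0) hcont hdiff (fun s hs => (hd0 s hs).ge)
  have hanti := antitoneOn_of_deriv_nonpos (convex_Ici 0) hcont hdiff (fun s hs => (hd0 s hs).le)
  exact le_antisymm (hanti Set.self_mem_Ici ht ht) (hmono Set.self_mem_Ici ht ht)


lemma aux_box {N : ℕ} (a B : ℝ) (u : ℕ → Fin N → ℝ) (hu : ∀ n i, a ≤ u n i ∧ u n i ≤ B) :
    ∃ z : Fin N → ℝ, (∀ i, a ≤ z i ∧ z i ≤ B) ∧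
      ∃ φ : ℕ → ℕ, StrictMono φ ∧ Tendsto (fun n => u (φ n)) atTop (𝓝 z) := by
  have hc : IsCompact (Set.univ.pi fun _ : Fin N => Set.Icc a B) :=
    isCompact_univ_pi fun _ => isCompact_Icc
  obtain ⟨z, hz, φ, hφ, hlim⟩ := hc.tendsto_subseq (x := u)
    (fun n => Set.mem_univ_pi.2 fun i => ⟨(hu n i).1, (hu n i).2⟩)
  exact ⟨z, fun i => ⟨(Set.mem_univ_pi.1 hz i).1, (Set.mem_univ_pi.1 hz i).2⟩, φ, hφ, hlim⟩

lemma aux_unif {ι : Type*} [DecidableEq ι] (s : Finset ι) (g : ι → ℕ → ℝ)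
    (h : ∀ j ∈ s, ∃ c : ℝ, 0 < c ∧ ∀ᶠ n in atTop, c ≤ g j n) :
    ∃ c : ℝ, 0 < c ∧ ∀ᶠ n in atTop, ∀ j ∈ s, c ≤ g j n := by
  classical
  induction s using Finset.induction with
  | empty => exact ⟨1, one_pos, by simp⟩
  | @insert a s ha ih =>
    obtain ⟨c1, hc1, he1⟩ := h a (by simp)
    obtain ⟨c2, hc2, he2⟩ := ih (fun j hj => h j (by simp [hj]))
    refine ⟨min c1 c2, lt_min hc1 hc2, ?_⟩
    filter_upwards [he1, he2] with n h1 h2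
    intro j hj
    rcases Finset.mem_insert.1 hj with rfl | hj
    · exact le_trans (min_le_left _ _) h1
    · exact le_trans (min_le_right _ _) (h2 j hj)

lemma tierLemma {N : ℕ} (hN : 0 < N)
    (C : Finset (Fin N → ℕ)) (R : Finset ((Fin N → ℕ) × (Fin N → ℕ)))
    (hnet : IsNetwork C R) (hwr : WeaklyReversible R)
    (hsingle : ∀ y ∈ C, ∀ y' ∈ C, Relation.ReflTransGen (symStep R) y y')
    (κ : ((Fin N → ℕ) × (Fin N → ℕ)) → ℝ → ℝ) (η : ℝ) (hη : 0 < η)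
    (hκ : ∀ r ∈ R, ∀ t : ℝ, 0 ≤ t → η < κ r t ∧ κ r t < 1 / η)
    (x : ℝ → Fin N → ℝ)
    (hpos : ∀ t : ℝ, 0 ≤ t → ∀ i, 0 < x t i)
    (hODE : ∀ t : ℝ, 0 ≤ t →
      HasDerivAt x (∑ r ∈ R, (κ r t * monom (x t) r.1) • (cv r.2 - cv r.1)) t)
    (B : ℝ) (hB1 : 1 ≤ B) (hbdd : ∀ t : ℝ, 0 ≤ t → ∀ i, x t i ≤ B)
    (hCne : C.Nonempty)
    (Λ : Finset (Fin N)) (c₀ : ℝ) (hc₀ : 0 < c₀) (T₀ : ℝ)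
    (hlow : ∀ t, T₀ ≤ t → ∀ i, i ∉ Λ → c₀ ≤ x t i)
    (hzero : ∀ tn : ℕ → ℝ, Tendsto tn atTop atTop → ∀ z : Fin N → ℝ,
        Tendsto (fun n => x (tn n)) atTop (𝓝 z) → ∃ i ∈ Λ, z i = 0) :
    ∃ T : ℝ, ∀ t, T ≤ t →
      (∑ r ∈ R, κ r t * monom (x t) r.1 *
        (Real.log (monS Λ (x t) r.2) - Real.log (monS Λ (x t) r.1)))
      ≤ -(∑ y ∈ C, monS Λ (x t) y) := by
  classical
  by_contra hcon
  push_neg at hcon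
  choose tn htn1 htn2 using fun n : ℕ => hcon n
  have htn0 : ∀ n : ℕ, (0:ℝ) ≤ tn n := fun n => le_trans (Nat.cast_nonneg n) (htn1 n)
  have htnTop : Tendsto tn atTop atTop :=
    tendsto_atTop_mono htn1 tendsto_natCast_atTop_atTop
  -- extraction 1 : convergence of states
  obtain ⟨z, hzbox, φ₁, hφ₁, hxz1⟩ := aux_box 0 B (fun n => x (tn n))
    (fun n i => ⟨(hpos _ (htn0 n) i).le, hbdd _ (htn0 n) i⟩)
  -- extraction 2 : convergence of all monomial ratios
  obtain ⟨φ₂, hφ₂, hrat⟩ := aux_subseq_family (C ×ˢ C)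
    (fun p n => monS Λ (x (tn (φ₁ n))) p.1 / monS Λ (x (tn (φ₁ n))) p.2)
    (fun p n => le_of_lt (div_pos (monS_pos _ (hpos _ (htn0 _)) _) (monS_pos _ (hpos _ (htn0 _)) _)))
  set t2 : ℕ → ℝ := fun n => tn (φ₁ (φ₂ n)) with ht2def
  have ht20 : ∀ n, (0:ℝ) ≤ t2 n := fun n => htn0 _
  have ht2Top : Tendsto t2 atTop atTop := htnTop.comp ((hφ₁.comp hφ₂).tendsto_atTop)
  have hxz : Tendsto (fun n => x (t2 n)) atTop (𝓝 z) := hxz1.comp hφ₂.tendsto_atTop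
  set S : (Fin N → ℕ) → ℕ → ℝ := fun y n => monS Λ (x (t2 n)) y with hSdef
  have hSpos : ∀ y n, 0 < S y n := fun y n => monS_pos _ (hpos _ (ht20 n)) _
  have hratconv : ∀ a ∈ C, ∀ b ∈ C,
      (∃ l, 0 ≤ l ∧ Tendsto (fun n => S a n / S b n) atTop (𝓝 l)) ∨
        Tendsto (fun n => S a n / S b n) atTop atTop := by
    intro a ha b hb
    exact hrat (a, b) (Finset.mem_product.2 ⟨ha, hb⟩)
  set Rel : (Fin N → ℕ) → (Fin N → ℕ) → Prop := fun a b =>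
    ∃ c : ℝ, 0 < c ∧ ∀ᶠ n in atTop, c ≤ S a n / S b n with hRelDef
  have htot : ∀ a ∈ C, ∀ b ∈ C, Rel a b ∨ Rel b a := by
    intro a ha b hb
    rcases hratconv a ha b hb with ⟨l, hl0, hlim⟩ | hlim
    · rcases hl0.lt_or_eq with hl | hl
      · exact Or.inl ⟨l / 2, by positivity, hlim.eventually (eventually_ge_nhds (half_lt_self hl))⟩
      · refine Or.inr ⟨1, one_pos, ?_⟩
        have hq0' : Tendsto (fun n => S a n / S b n) atTop (𝓝 0) := by rw [hl]; exact hlim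
        have hinv : Tendsto (fun n => S b n / S a n) atTop atTop := by
          have hmem : ∀ n : ℕ, S a n / S b n ∈ Set.Ioi (0:ℝ) :=
            fun n => div_pos (hSpos a n) (hSpos b n)
          have h2 := tendsto_inv_nhdsGT_zero.comp
            (tendsto_nhdsWithin_iff.2 ⟨hq0', Eventually.of_forall hmem⟩)
          refine h2.congr fun n => ?_
          show (S a n / S b n)⁻¹ = S b n / S a n
          rw [inv_div]
        exact hinv.eventually_ge_atTop 1
    · exact Or.inl ⟨1, one_pos, hlim.eventually_ge_atTop 1⟩
  have hnotRel : ∀ a ∈ C, ∀ b ∈ C, ¬ Rel a b →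
      Tendsto (fun n => S a n / S b n) atTop (𝓝 0) := by
    intro a ha b hb hnr
    rcases hratconv a ha b hb with ⟨l, hl0, hlim⟩ | hlim
    · rcases hl0.lt_or_eq with hl | hl
      · exact absurd ⟨l / 2, by positivity,
          hlim.eventually (eventually_ge_nhds (half_lt_self hl))⟩ hnr
      · rw [hl]; exact hlim
    · exact absurd ⟨1, one_pos, hlim.eventually_ge_atTop 1⟩ hnr
  have htrans : ∀ a ∈ C, ∀ b ∈ C, ∀ c ∈ C, Rel a b → Rel b c → Rel a c := by
    intro a _ b _ c _ h1 h2
    obtain ⟨c1, hc1, e1⟩ := h1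
    obtain ⟨c2, hc2, e2⟩ := h2
    refine ⟨c1 * c2, by positivity, ?_⟩
    filter_upwards [e1, e2] with n g1 g2
    have hm := mul_le_mul g1 g2 hc2.le (le_of_lt (div_pos (hSpos a n) (hSpos b n)))
    rwa [div_mul_div_cancel₀ (hSpos b n).ne'] at hm
  by_cases hallT1 : ∀ a ∈ C, ∀ b ∈ C, Rel a b
  · -- all monomials comparable: conservation-law contradiction
    obtain ⟨i₀, hi₀Λ, hzi₀⟩ := hzero t2 ht2Top z hxz
    have hxi : ∀ i, Tendsto (fun n => x (t2 n) i) atTop (𝓝 (z i)) :=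
      fun i => tendsto_pi_nhds.1 hxz i
    have hxi₀ : Tendsto (fun n => x (t2 n) i₀) atTop (𝓝 0) := by
      have := hxi i₀; rwa [hzi₀] at this
    set v : ℕ → Fin N → ℝ := fun n i => if i ∈ Λ then -Real.log (x (t2 n) i) else 0 with hvdef
    have hlogB : 0 ≤ Real.log B := Real.log_nonneg hB1
    have hvlb : ∀ n i, -Real.log B ≤ v n i := by
      intro n i
      by_cases hi : i ∈ Λ
      · simp only [hvdef, if_pos hi, neg_le_neg_iff]
        exact Real.log_le_log (hpos _ (ht20 n) i) (hbdd _ (ht20 n) i)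
      · simp only [hvdef, if_neg hi]
        linarith
    set sden : ℕ → ℝ := fun n => ∑ i, (v n i + (Real.log B + 1)) with hsdendef
    have hterm1 : ∀ n i, 1 ≤ v n i + (Real.log B + 1) := by
      intro n i; have := hvlb n i; linarith
    have hsN : ∀ n, (N : ℝ) ≤ sden n := by
      intro n
      have h1 : ∑ _i : Fin N, (1:ℝ) ≤ sden n :=
        Finset.sum_le_sum (fun i _ => hterm1 n i)
      simpa using h1
    have hspos : ∀ n, 0 < sden n := fun n =>
      lt_of_lt_of_le (by exact_mod_cast hN) (hsN n)
    have hs1 : ∀ n, 1 ≤ sden n := fun n =>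
      le_trans (by exact_mod_cast hN) (hsN n)
    have hsTop : Tendsto sden atTop atTop := by
      have hlogbot : Tendsto (fun n => Real.log (x (t2 n) i₀)) atTop atBot := by
        apply Real.tendsto_log_nhdsGT_zero.comp
        exact tendsto_nhdsWithin_iff.2 ⟨hxi₀, Eventually.of_forall fun n => hpos _ (ht20 n) i₀⟩
      have hneg : Tendsto (fun n => -Real.log (x (t2 n) i₀)) atTop atTop :=
        tendsto_neg_atBot_atTop.comp hlogbot
      have hneg2 : Tendsto (fun n => -Real.log (x (t2 n) i₀) + (Real.log B + 1)) atTop atTop :=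
        tendsto_atTop_add_const_right _ _ hneg
      apply tendsto_atTop_mono _ hneg2
      intro n
      have : v n i₀ + (Real.log B + 1) ≤ sden n :=
        Finset.single_le_sum (fun i _ => le_trans zero_le_one (hterm1 n i)) (Finset.mem_univ i₀)
      simpa only [hvdef, if_pos hi₀Λ] using this
    set uq : ℕ → Fin N → ℝ := fun n i => v n i / sden n with huqdef
    have hvub : ∀ n i, v n i ≤ sden n := by
      intro n i
      have h1 : v n i + (Real.log B + 1) ≤ sden n :=
        Finset.single_le_sum (fun j _ => le_trans zero_le_one (hterm1 n j)) (Finset.mem_univ i)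
      linarith
    have huqbox : ∀ n i, -Real.log B ≤ uq n i ∧ uq n i ≤ 1 := by
      intro n i
      constructor
      · rcases le_or_gt 0 (v n i) with hv0 | hv0
        · exact le_trans (by linarith) (div_nonneg hv0 (hspos n).le)
        · have h := div_le_self (neg_nonneg.2 hv0.le) (hs1 n)
          rw [neg_div] at h
          have h2 : v n i ≤ v n i / sden n := by linarith
          exact le_trans (hvlb n i) h2
      · rw [div_le_one (hspos n)]
        exact hvub n i
    obtain ⟨w, hwbox, φ₃, hφ₃, huw⟩ := aux_box (-Real.log B) 1 uq (fun n i => huqbox n i)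
    set t3 : ℕ → ℝ := fun n => t2 (φ₃ n) with ht3def
    have hxz3 : Tendsto (fun n => x (t3 n)) atTop (𝓝 z) := hxz.comp hφ₃.tendsto_atTop
    have hxi3 : ∀ i, Tendsto (fun n => x (t3 n) i) atTop (𝓝 (z i)) :=
      fun i => tendsto_pi_nhds.1 hxz3 i
    have hsTop3 : Tendsto (fun n => sden (φ₃ n)) atTop atTop := hsTop.comp hφ₃.tendsto_atTop
    have huwi : ∀ i, Tendsto (fun n => uq (φ₃ n) i) atTop (𝓝 (w i)) :=
      fun i => tendsto_pi_nhds.1 huw i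
    have hw0 : ∀ i, i ∉ Λ → w i = 0 := by
      intro i hi
      have h1 : Tendsto (fun n => uq (φ₃ n) i) atTop (𝓝 0) := by
        have : (fun n => uq (φ₃ n) i) = fun _ => (0:ℝ) := by
          funext n; simp [huqdef, hvdef, if_neg hi]
        rw [this]; exact tendsto_const_nhds
      exact tendsto_nhds_unique (huwi i) h1
    have hwnn : ∀ i, 0 ≤ w i := by
      intro i
      have h0 : Tendsto (fun n => -Real.log B / sden (φ₃ n)) atTop (𝓝 0) :=
        Tendsto.div_atTop tendsto_const_nhds hsTop3
      refine le_of_tendsto_of_tendsto' h0 (huwi i) fun n => ?_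
      exact (div_le_div_iff_of_pos_right (hspos _)).2 (hvlb _ i)
    have hwsum : ∑ i, w i = 1 := by
      have h1 : Tendsto (fun n => ∑ i, uq (φ₃ n) i) atTop (𝓝 (∑ i, w i)) :=
        tendsto_finset_sum _ (fun i _ => huwi i)
      have hform : ∀ n, ∑ i, uq n i = 1 - (N * (Real.log B + 1)) / sden n := by
        intro n
        have hsum_v : ∑ i, v n i = sden n - N * (Real.log B + 1) := by
          have : sden n = (∑ i, v n i) + N * (Real.log B + 1) := by
            simp only [hsdendef]
            rw [Finset.sum_add_distrib, Finset.sum_const]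
            simp [nsmul_eq_mul]
            ring
          linarith
        have : ∑ i, uq n i = (∑ i, v n i) / sden n := by
          rw [huqdef, Finset.sum_div]
        rw [this, hsum_v, sub_div, div_self (hspos n).ne']
      have h2 : Tendsto (fun n => ∑ i, uq (φ₃ n) i) atTop (𝓝 1) := by
        have h3 : Tendsto (fun n => 1 - (N * (Real.log B + 1)) / sden (φ₃ n)) atTop (𝓝 (1 - 0)) :=
          tendsto_const_nhds.sub (Tendsto.div_atTop tendsto_const_nhds hsTop3)
        rw [sub_zero] at h3
        exact h3.congr fun n => (hform (φ₃ n)).symm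
      exact tendsto_nhds_unique h1 h2
    have hexj : ∃ j, 0 < w j := by
      by_contra hno
      push_neg at hno
      have : ∑ i, w i ≤ 0 := Finset.sum_nonpos fun i _ => hno i
      rw [hwsum] at this
      linarith
    -- orthogonality of w to all complex differences
    have horth : ∀ a ∈ C, ∀ b ∈ C, ∑ i, (cv a i - cv b i) * w i = 0 := by
      intro a ha b hb
      obtain ⟨c1, hc1, e1⟩ := hallT1 a ha b hb
      obtain ⟨c2, hc2, e2⟩ := hallT1 b hb a ha
      have hpt : ∀ n, ∑ i, (cv a i - cv b i) * v n i
          = Real.log (S b n) - Real.log (S a n) := by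
        intro n
        have hxp : ∀ i, 0 < x (t2 n) i := hpos _ (ht20 n)
        rw [hSdef]
        simp only []
        rw [log_monS Λ hxp a, log_monS Λ hxp b]
        rw [← Finset.sum_sub_distrib]
        have hzero' : ∀ i ∈ (Finset.univ \ Λ), (cv a i - cv b i) * v n i = 0 := by
          intro i hi
          have : i ∉ Λ := (Finset.mem_sdiff.1 hi).2
          simp [hvdef, if_neg this]
        rw [← Finset.sum_subset (Finset.subset_univ Λ)
          (fun i _ hi => by simp [hvdef, if_neg hi])]
        apply Finset.sum_congr rfl
        intro i hi
        simp only [hvdef, if_pos hi, cv]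
        ring
      have hptu : ∀ n, ∑ i, (cv a i - cv b i) * uq n i
          = (Real.log (S b n) - Real.log (S a n)) / sden n := by
        intro n
        rw [← hpt n, Finset.sum_div]
        apply Finset.sum_congr rfl
        intro i _
        rw [huqdef]
        ring
      have hlim1 : Tendsto (fun n => ∑ i, (cv a i - cv b i) * uq (φ₃ n) i) atTop
          (𝓝 (∑ i, (cv a i - cv b i) * w i)) :=
        tendsto_finset_sum _ (fun i _ => (huwi i).const_mul _)
      have hlim2 : Tendsto (fun n => ∑ i, (cv a i - cv b i) * uq (φ₃ n) i) atTop (𝓝 0) := by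
        have hlow2 : Tendsto (fun n => Real.log c2 / sden (φ₃ n)) atTop (𝓝 0) :=
          Tendsto.div_atTop tendsto_const_nhds hsTop3
        have hhigh2 : Tendsto (fun n => -Real.log c1 / sden (φ₃ n)) atTop (𝓝 0) :=
          Tendsto.div_atTop tendsto_const_nhds hsTop3
        have he1' : ∀ᶠ n in atTop, c1 ≤ S a (φ₃ n) / S b (φ₃ n) :=
          hφ₃.tendsto_atTop.eventually e1
        have he2' : ∀ᶠ n in atTop, c2 ≤ S b (φ₃ n) / S a (φ₃ n) :=
          hφ₃.tendsto_atTop.eventually e2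
        refine tendsto_of_tendsto_of_tendsto_of_le_of_le' hlow2 hhigh2 ?_ ?_
        · filter_upwards [he2'] with n h2'
          rw [hptu (φ₃ n)]
          apply (div_le_div_iff_of_pos_right (hspos _)).2
          have hlog2 : Real.log c2 ≤ Real.log (S b (φ₃ n) / S a (φ₃ n)) :=
            Real.log_le_log hc2 h2'
          rwa [Real.log_div (hSpos b _).ne' (hSpos a _).ne'] at hlog2
        · filter_upwards [he1'] with n h1'
          rw [hptu (φ₃ n)]
          apply (div_le_div_iff_of_pos_right (hspos _)).2
          have hlog1 : Real.log c1 ≤ Real.log (S a (φ₃ n) / S b (φ₃ n)) :=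
            Real.log_le_log hc1 h1'
          rw [Real.log_div (hSpos a _).ne' (hSpos b _).ne'] at hlog1
          linarith
      exact tendsto_nhds_unique hlim1 hlim2
    -- conservation of ∑ w i * x t i
    obtain ⟨j, hj⟩ := hexj
    have hψd : ∀ t, 0 ≤ t → HasDerivAt (fun s => ∑ i, w i * x s i) 0 t := by
      intro t ht
      have hD := hODE t ht
      have hco : ∀ i : Fin N, HasDerivAt (fun s => x s i)
          ((∑ r ∈ R, (κ r t * monom (x t) r.1) • (cv r.2 - cv r.1)) i) t :=
        fun i => (hasDerivAt_pi.1 hD) i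
      have hsum := HasDerivAt.fun_sum (x := t) (u := Finset.univ)
        (A := fun i s => w i * x s i)
        (A' := fun i => w i * ((∑ r ∈ R, (κ r t * monom (x t) r.1) • (cv r.2 - cv r.1)) i))
        (fun i _ => (hco i).const_mul (w i))
      have hval : ∑ i, w i * ((∑ r ∈ R, (κ r t * monom (x t) r.1) • (cv r.2 - cv r.1)) i) = 0 := by
        have hcoord : ∀ i, ((∑ r ∈ R, (κ r t * monom (x t) r.1) • (cv r.2 - cv r.1)) i)
            = ∑ r ∈ R, (κ r t * monom (x t) r.1) * (cv r.2 i - cv r.1 i) := by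
          intro i
          rw [Finset.sum_apply]
          apply Finset.sum_congr rfl
          intro r _
          simp [Pi.smul_apply, Pi.sub_apply, smul_eq_mul]
        calc ∑ i, w i * ((∑ r ∈ R, (κ r t * monom (x t) r.1) • (cv r.2 - cv r.1)) i)
            = ∑ i, ∑ r ∈ R, w i * ((κ r t * monom (x t) r.1) * (cv r.2 i - cv r.1 i)) := by
              apply Finset.sum_congr rfl
              intro i _
              rw [hcoord i, Finset.mul_sum]
          _ = ∑ r ∈ R, ∑ i, w i * ((κ r t * monom (x t) r.1) * (cv r.2 i - cv r.1 i)) :=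
              Finset.sum_comm
          _ = ∑ r ∈ R, (κ r t * monom (x t) r.1) * (∑ i, (cv r.2 i - cv r.1 i) * w i) := by
              apply Finset.sum_congr rfl
              intro r _
              rw [Finset.mul_sum]
              apply Finset.sum_congr rfl
              intro i _
              ring
          _ = 0 := by
              apply Finset.sum_eq_zero
              intro r hr
              have h21 := horth r.2 (hnet.1 r hr).2.1 r.1 (hnet.1 r hr).1
              rw [h21, mul_zero]
      rw [hval] at hsum
      exact hsum
    have hconst := aux_const_of_deriv_zero hψd
    have hψ0pos : 0 < ∑ i, w i * x 0 i := by
      have hterm : ∀ i ∈ Finset.univ, 0 ≤ w i * x 0 i :=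
        fun i _ => mul_nonneg (hwnn i) (hpos 0 le_rfl i).le
      have hsing : w j * x 0 j ≤ ∑ i, w i * x 0 i :=
        Finset.single_le_sum hterm (Finset.mem_univ j)
      have : 0 < w j * x 0 j := mul_pos hj (hpos 0 le_rfl j)
      linarith
    have hwz : ∀ i, w i * z i = 0 := by
      intro i
      rcases (hwnn i).lt_or_eq with hwi | hwi
      · -- w i > 0 : z i = 0
        have hiΛ : i ∈ Λ := by
          by_contra hiN
          rw [hw0 i hiN] at hwi
          exact lt_irrefl _ hwi
        have hvTop : Tendsto (fun n => v (φ₃ n) i) atTop atTop := by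
          have hev : ∀ᶠ n in atTop, w i / 2 ≤ uq (φ₃ n) i :=
            (huwi i).eventually (eventually_ge_nhds (by linarith))
          have hm : Tendsto (fun n => w i / 2 * sden (φ₃ n)) atTop atTop :=
            Tendsto.const_mul_atTop (by linarith) hsTop3
          apply tendsto_atTop_mono' _ _ hm
          filter_upwards [hev] with n hn
          have : w i / 2 * sden (φ₃ n) ≤ uq (φ₃ n) i * sden (φ₃ n) :=
            mul_le_mul_of_nonneg_right hn (hspos _).le
          rwa [huqdef, div_mul_cancel₀ _ (hspos (φ₃ n)).ne'] at this
        have hxe : Tendsto (fun n => x (t3 n) i) atTop (𝓝 0) := by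
          have hexp : ∀ n, x (t3 n) i = Real.exp (-(v (φ₃ n) i)) := by
            intro n
            rw [hvdef]
            simp only [if_pos hiΛ, neg_neg]
            rw [Real.exp_log (hpos _ (ht20 (φ₃ n)) i)]
          have hbot : Tendsto (fun n => -(v (φ₃ n) i)) atTop atBot := by
            have := hvTop
            exact tendsto_neg_atTop_atBot.comp this
          have := Real.tendsto_exp_atBot.comp hbot
          exact this.congr fun n => (hexp n).symm
        have : z i = 0 := tendsto_nhds_unique (hxi3 i) hxe
        rw [this, mul_zero]
      · rw [← hwi, zero_mul]
    have hψlim : Tendsto (fun n => ∑ i, w i * x (t3 n) i) atTop (𝓝 (∑ i, w i * z i)) :=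
      tendsto_finset_sum _ (fun i _ => (hxi3 i).const_mul _)
    have hψz : (∑ i, w i * z i) = 0 := by
      rw [Finset.sum_eq_zero fun i _ => hwz i]
    have hψconst : Tendsto (fun n => ∑ i, w i * x (t3 n) i) atTop (𝓝 (∑ i, w i * x 0 i)) := by
      have : ∀ n : ℕ, (∑ i, w i * x (t3 n) i) = ∑ i, w i * x 0 i :=
        fun n => hconst _ (ht20 (φ₃ n))
      rw [show (fun n => ∑ i, w i * x (t3 n) i) = fun _ => ∑ i, w i * x 0 i from funext this]
      exact tendsto_const_nhds
    have heq0 : (∑ i, w i * x 0 i) = ∑ i, w i * z i :=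
      tendsto_nhds_unique hψconst hψlim
    rw [hψz] at heq0
    rw [heq0] at hψ0pos
    exact lt_irrefl _ hψ0pos
  · -- tier drop: quantitative contradiction
    push_neg at hallT1
    obtain ⟨yb, hybC, ye, hyeC, hnotbe⟩ := hallT1
    obtain ⟨ymax, hymaxC, hymax⟩ := aux_exists_max Rel C hCne htot htrans
    have hPymax : ymax ∈ C ∧ ∀ y' ∈ C, Rel ymax y' := ⟨hymaxC, hymax⟩
    have hPnb : ¬ (yb ∈ C ∧ ∀ y' ∈ C, Rel yb y') := fun h => hnotbe (h.2 ye hyeC)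
    have hreach : Relation.ReflTransGen (dirStep R) ymax yb :=
      hwr _ _ (hsingle _ hymaxC _ hybC)
    obtain ⟨yc, yd, hstep, hPc, hPd⟩ :=
      aux_cross (fun y => y ∈ C ∧ ∀ y' ∈ C, Rel y y') hreach hPymax hPnb
    have hrcd : (yc, yd) ∈ R := hstep
    have hycC : yc ∈ C := (hnet.1 _ hrcd).1
    have hydC : yd ∈ C := (hnet.1 _ hrcd).2.1
    have hde : ∃ ye' ∈ C, ¬ Rel yd ye' := by
      by_contra hh
      push_neg at hh
      exact hPd ⟨hydC, hh⟩
    obtain ⟨ye', hye'C, hnotde⟩ := hde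
    have hde0 : Tendsto (fun n => S yd n / S ye' n) atTop (𝓝 0) :=
      hnotRel _ hydC _ hye'C hnotde
    obtain ⟨γec, hγec, heec⟩ := hPc.2 ye' hye'C
    have hdc0 : Tendsto (fun n => S yd n / S yc n) atTop (𝓝 0) := by
      have hub : ∀ᶠ n in atTop, S yd n / S yc n ≤ (S yd n / S ye' n) * (1 / γec) := by
        filter_upwards [heec] with n hn
        have hn' : γec * S ye' n ≤ S yc n := by
          rw [le_div_iff₀ (hSpos ye' n)] at hn
          linarith
        have hec : S ye' n / S yc n ≤ 1 / γec := by
          rw [div_le_div_iff₀ (hSpos yc n) hγec]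
          nlinarith
        have hid : S yd n / S yc n = (S yd n / S ye' n) * (S ye' n / S yc n) :=
          (div_mul_div_cancel₀ (hSpos ye' n).ne').symm
        rw [hid]
        exact mul_le_mul_of_nonneg_left hec (le_of_lt (div_pos (hSpos yd n) (hSpos ye' n)))
      have hlb : ∀ᶠ n in atTop, 0 ≤ S yd n / S yc n :=
        Eventually.of_forall fun n => (div_pos (hSpos yd n) (hSpos yc n)).le
      have hmul : Tendsto (fun n => (S yd n / S ye' n) * (1 / γec)) atTop (𝓝 0) := by
        have := hde0.mul_const (1 / γec)
        simpa using this
      exact squeeze_zero' hlb hub hmul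
    have hL : Tendsto (fun n => Real.log (S yd n / S yc n)) atTop atBot :=
      Real.tendsto_log_nhdsGT_zero.comp
        (tendsto_nhdsWithin_iff.2 ⟨hdc0,
          Eventually.of_forall fun n => div_pos (hSpos yd n) (hSpos yc n)⟩)
    obtain ⟨γ, hγ, hγev⟩ := aux_unif C (fun y n => S yc n / S y n) (fun y hy => hPc.2 y hy)
    -- constants
    set c₀' : ℝ := min c₀ 1 with hc₀'def
    have hc₀'pos : 0 < c₀' := lt_min hc₀ one_pos
    have hc₀'le1 : c₀' ≤ 1 := min_le_right _ _
    set dmax : ℕ := C.sup (fun y => ∑ i, y i) with hdmaxdef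
    set p₁ : ℝ := c₀' ^ dmax with hp₁def
    set p₂ : ℝ := B ^ dmax with hp₂def
    have hp₁pos : 0 < p₁ := pow_pos hc₀'pos _
    have hp₂pos : 0 < p₂ := pow_pos (by linarith) _
    have hcard : (0:ℝ) < (C.card : ℝ) := by
      exact_mod_cast Finset.card_pos.2 hCne
    set K₁ : ℝ := (R.card : ℝ) * (p₂ / η) with hK₁def
    set K₂ : ℝ := η * p₁ * (γ / (C.card : ℝ)) with hK₂def
    have hK₂pos : 0 < K₂ := by positivity
    have hK₁nn : 0 ≤ K₁ := by positivity
    -- choose a good index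
    have hevT₀ : ∀ᶠ n in atTop, T₀ ≤ t2 n := ht2Top.eventually_ge_atTop T₀
    have hevL : ∀ᶠ n in atTop,
        Real.log (S yd n / S yc n) ≤ -(K₁ + 1) / K₂ ∧ Real.log (S yd n / S yc n) ≤ 0 := by
      have h1 := hL.eventually_le_atBot (-(K₁ + 1) / K₂)
      have h2 := hL.eventually_le_atBot 0
      filter_upwards [h1, h2] with n hn1 hn2
      exact ⟨hn1, hn2⟩
    obtain ⟨n, hnT₀, ⟨hnL, hnL0⟩, hnγ⟩ := (hevT₀.and (hevL.and hγev)).exists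
    have hSeq : ∀ y, S y n = monS Λ (x (t2 n)) y := fun y => by rw [hSdef]
    have ht : (0:ℝ) ≤ t2 n := ht20 n
    set A : ℝ := ∑ y ∈ C, monS Λ (x (t2 n)) y with hAdef
    have hApos : 0 < A := Finset.sum_pos (fun y _ => monS_pos _ (hpos _ ht) _) hCne
    have hxp : ∀ i, 0 < x (t2 n) i := hpos _ ht
    have hPbound : ∀ y ∈ C, monS Λᶜ (x (t2 n)) y ≤ p₂ := by
      intro y hy
      calc monS Λᶜ (x (t2 n)) y ≤ ∏ i ∈ Λᶜ, B ^ (y i) :=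
            Finset.prod_le_prod (fun i _ => pow_nonneg (hxp i).le _)
              (fun i _ => pow_le_pow_left₀ (hxp i).le (hbdd _ ht i) _)
        _ = B ^ (∑ i ∈ Λᶜ, y i) := Finset.prod_pow_eq_pow_sum _ _ _
        _ ≤ p₂ := by
            apply pow_le_pow_right₀ hB1
            calc ∑ i ∈ Λᶜ, y i ≤ ∑ i, y i := Finset.sum_le_sum_of_subset (Finset.subset_univ _)
              _ ≤ dmax := Finset.le_sup hy
    have hPlow : ∀ y ∈ C, p₁ ≤ monS Λᶜ (x (t2 n)) y := by
      intro y hy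
      calc p₁ ≤ c₀' ^ (∑ i ∈ Λᶜ, y i) := by
            apply pow_le_pow_of_le_one hc₀'pos.le hc₀'le1
            calc ∑ i ∈ Λᶜ, y i ≤ ∑ i, y i := Finset.sum_le_sum_of_subset (Finset.subset_univ _)
              _ ≤ dmax := Finset.le_sup hy
        _ = ∏ i ∈ Λᶜ, c₀' ^ (y i) := (Finset.prod_pow_eq_pow_sum _ _ _).symm
        _ ≤ monS Λᶜ (x (t2 n)) y := by
            apply Finset.prod_le_prod (fun i _ => pow_nonneg hc₀'pos.le _)
            intro i hi
            apply pow_le_pow_left₀ hc₀'pos.le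
            exact le_trans (min_le_left _ _) (hlow _ hnT₀ i (Finset.mem_compl.1 hi))
    -- generic term bound
    have hterm : ∀ r ∈ R, κ r (t2 n) * monom (x (t2 n)) r.1 *
        (Real.log (monS Λ (x (t2 n)) r.2) - Real.log (monS Λ (x (t2 n)) r.1)) ≤ (p₂ / η) * A := by
      intro r hr
      obtain ⟨hκ1, hκ2⟩ := hκ r hr (t2 n) ht
      have hκpos : 0 < κ r (t2 n) := lt_trans hη hκ1
      have hS1 : 0 < monS Λ (x (t2 n)) r.1 := monS_pos _ hxp _
      have hS2 : 0 < monS Λ (x (t2 n)) r.2 := monS_pos _ hxp _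
      have hmono : 0 < monom (x (t2 n)) r.1 := Finset.prod_pos fun i _ => pow_pos (hxp i) _
      rcases le_or_gt (Real.log (monS Λ (x (t2 n)) r.2) - Real.log (monS Λ (x (t2 n)) r.1)) 0
        with hd | hd
      · have hle0 : κ r (t2 n) * monom (x (t2 n)) r.1 *
            (Real.log (monS Λ (x (t2 n)) r.2) - Real.log (monS Λ (x (t2 n)) r.1)) ≤ 0 :=
          mul_nonpos_of_nonneg_of_nonpos (mul_pos hκpos hmono).le hd
        have hrhs : (0:ℝ) ≤ (p₂ / η) * A := by positivity
        linarith
      · have h1 : Real.log (monS Λ (x (t2 n)) r.2) - Real.log (monS Λ (x (t2 n)) r.1)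
            ≤ monS Λ (x (t2 n)) r.2 / monS Λ (x (t2 n)) r.1 := by
          rw [← Real.log_div hS2.ne' hS1.ne']
          have := Real.log_le_sub_one_of_pos (div_pos hS2 hS1)
          linarith
        have hS2A : monS Λ (x (t2 n)) r.2 ≤ A :=
          Finset.single_le_sum (fun y _ => (monS_pos _ hxp y).le) (hnet.1 r hr).2.1
        calc κ r (t2 n) * monom (x (t2 n)) r.1 *
              (Real.log (monS Λ (x (t2 n)) r.2) - Real.log (monS Λ (x (t2 n)) r.1))
            ≤ κ r (t2 n) * monom (x (t2 n)) r.1 *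
              (monS Λ (x (t2 n)) r.2 / monS Λ (x (t2 n)) r.1) :=
              mul_le_mul_of_nonneg_left h1 (mul_pos hκpos hmono).le
          _ = κ r (t2 n) * (monS Λᶜ (x (t2 n)) r.1 * monS Λ (x (t2 n)) r.2) := by
              rw [monom_eq_monS_mul Λ]
              field_simp
          _ ≤ (1 / η) * (p₂ * A) := by
              apply mul_le_mul hκ2.le _ _ (by positivity)
              · exact mul_le_mul (hPbound _ (hnet.1 r hr).1) hS2A hS2.le hp₂pos.le
              · exact (mul_pos (monS_pos _ hxp _) (monS_pos _ hxp _)).le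
          _ = (p₂ / η) * A := by ring
    -- star term bound
    have hstar : κ (yc, yd) (t2 n) * monom (x (t2 n)) yc *
        (Real.log (monS Λ (x (t2 n)) yd) - Real.log (monS Λ (x (t2 n)) yc))
        ≤ K₂ * A * Real.log (S yd n / S yc n) := by
      obtain ⟨hκ1, hκ2⟩ := hκ (yc, yd) hrcd (t2 n) ht
      have hS1 : 0 < monS Λ (x (t2 n)) yc := monS_pos _ hxp _
      have hS2 : 0 < monS Λ (x (t2 n)) yd := monS_pos _ hxp _
      have hLeq : Real.log (S yd n / S yc n)
          = Real.log (monS Λ (x (t2 n)) yd) - Real.log (monS Λ (x (t2 n)) yc) := by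
        rw [hSeq yd, hSeq yc]
        exact Real.log_div hS2.ne' hS1.ne'
      have hScA : (γ / (C.card : ℝ)) * A ≤ monS Λ (x (t2 n)) yc := by
        have hbnd : ∀ y ∈ C, monS Λ (x (t2 n)) y ≤ monS Λ (x (t2 n)) yc / γ := by
          intro y hy
          have hq : γ ≤ monS Λ (x (t2 n)) yc / monS Λ (x (t2 n)) y := by
            have := hnγ y hy
            rwa [hSeq yc, hSeq y] at this
          rw [le_div_iff₀ (monS_pos _ hxp y)] at hq
          rw [le_div_iff₀ hγ]
          nlinarith
        have hsum : A ≤ (C.card : ℝ) * (monS Λ (x (t2 n)) yc / γ) := by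
          rw [hAdef]
          have h4 := Finset.sum_le_card_nsmul C (fun y => monS Λ (x (t2 n)) y)
            (monS Λ (x (t2 n)) yc / γ) hbnd
          rwa [nsmul_eq_mul] at h4
        have h5 := mul_le_mul_of_nonneg_left hsum hγ.le
        have h6 : γ * ((C.card : ℝ) * (monS Λ (x (t2 n)) yc / γ))
            = (C.card : ℝ) * monS Λ (x (t2 n)) yc := by
          field_simp
        rw [div_mul_eq_mul_div, div_le_iff₀ hcard]
        nlinarith [h5, h6]
      have hmonlb : η * (p₁ * ((γ / (C.card : ℝ)) * A))
          ≤ κ (yc, yd) (t2 n) * monom (x (t2 n)) yc := by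
        have h1 : p₁ * ((γ / (C.card : ℝ)) * A)
            ≤ monS Λᶜ (x (t2 n)) yc * monS Λ (x (t2 n)) yc := by
          apply mul_le_mul (hPlow _ hycC) hScA _ _
          · positivity
          · exact le_trans hp₁pos.le (hPlow _ hycC)
        have h2 : monom (x (t2 n)) yc = monS Λ (x (t2 n)) yc * monS Λᶜ (x (t2 n)) yc :=
          monom_eq_monS_mul Λ _ _
        calc η * (p₁ * ((γ / (C.card : ℝ)) * A))
            ≤ η * (monS Λᶜ (x (t2 n)) yc * monS Λ (x (t2 n)) yc) :=
              mul_le_mul_of_nonneg_left h1 hη.le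
          _ ≤ κ (yc, yd) (t2 n) * (monS Λᶜ (x (t2 n)) yc * monS Λ (x (t2 n)) yc) :=
              mul_le_mul_of_nonneg_right hκ1.le
                (mul_pos (monS_pos _ hxp _) (monS_pos _ hxp _)).le
          _ = κ (yc, yd) (t2 n) * monom (x (t2 n)) yc := by rw [h2]; ring
      calc κ (yc, yd) (t2 n) * monom (x (t2 n)) yc *
            (Real.log (monS Λ (x (t2 n)) yd) - Real.log (monS Λ (x (t2 n)) yc))
          = κ (yc, yd) (t2 n) * monom (x (t2 n)) yc * Real.log (S yd n / S yc n) := by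
            rw [hLeq]
        _ ≤ η * (p₁ * ((γ / (C.card : ℝ)) * A)) * Real.log (S yd n / S yc n) :=
            mul_le_mul_of_nonpos_right hmonlb hnL0
        _ = K₂ * A * Real.log (S yd n / S yc n) := by rw [hK₂def]; ring
    -- combine
    have hsplit : (∑ r ∈ R, κ r (t2 n) * monom (x (t2 n)) r.1 *
        (Real.log (monS Λ (x (t2 n)) r.2) - Real.log (monS Λ (x (t2 n)) r.1)))
        = κ (yc, yd) (t2 n) * monom (x (t2 n)) yc *
            (Real.log (monS Λ (x (t2 n)) yd) - Real.log (monS Λ (x (t2 n)) yc))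
          + ∑ r ∈ R.erase (yc, yd), κ r (t2 n) * monom (x (t2 n)) r.1 *
            (Real.log (monS Λ (x (t2 n)) r.2) - Real.log (monS Λ (x (t2 n)) r.1)) :=
      (Finset.add_sum_erase R _ hrcd).symm
    have hsum2 : ∑ r ∈ R.erase (yc, yd), κ r (t2 n) * monom (x (t2 n)) r.1 *
        (Real.log (monS Λ (x (t2 n)) r.2) - Real.log (monS Λ (x (t2 n)) r.1))
        ≤ (R.card : ℝ) * ((p₂ / η) * A) := by
      have h1 := Finset.sum_le_card_nsmul (R.erase (yc, yd))
        (fun r => κ r (t2 n) * monom (x (t2 n)) r.1 *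
          (Real.log (monS Λ (x (t2 n)) r.2) - Real.log (monS Λ (x (t2 n)) r.1)))
        ((p₂ / η) * A) (fun r hr => hterm r (Finset.mem_of_mem_erase hr))
      rw [nsmul_eq_mul] at h1
      apply le_trans h1
      apply mul_le_mul_of_nonneg_right _ (by positivity)
      exact_mod_cast Finset.card_le_card (Finset.erase_subset _ _)
    have hKL : K₂ * Real.log (S yd n / S yc n) ≤ -(K₁ + 1) := by
      have := mul_le_mul_of_nonneg_left hnL hK₂pos.le
      rwa [mul_div_cancel₀ _ hK₂pos.ne'] at this
    have hfinal : (∑ r ∈ R, κ r (t2 n) * monom (x (t2 n)) r.1 *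
        (Real.log (monS Λ (x (t2 n)) r.2) - Real.log (monS Λ (x (t2 n)) r.1))) ≤ -A := by
      rw [hsplit]
      have h2 : K₂ * Real.log (S yd n / S yc n) * A ≤ -(K₁ + 1) * A :=
        mul_le_mul_of_nonneg_right hKL hApos.le
      have he : K₂ * A * Real.log (S yd n / S yc n)
          = K₂ * Real.log (S yd n / S yc n) * A := by ring
      have h3 : (R.card : ℝ) * ((p₂ / η) * A) = K₁ * A := by rw [hK₁def]; ring
      linarith [hstar, hsum2, h2, he, h3]
    have hteq : t2 n = tn (φ₁ (φ₂ n)) := congrFun ht2def n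
    have hgt := htn2 (φ₁ (φ₂ n))
    rw [← hteq] at hgt
    rw [hAdef] at hfinal
    exact absurd hfinal (not_le.2 hgt)



lemma aux_hasDerivAt_W {N : ℕ} (R : Finset ((Fin N → ℕ) × (Fin N → ℕ)))
    (κ : ((Fin N → ℕ) × (Fin N → ℕ)) → ℝ → ℝ) (x : ℝ → Fin N → ℝ) (Λ : Finset (Fin N))
    {t : ℝ} (hx : ∀ i, 0 < x t i)
    (hD : HasDerivAt x (∑ r ∈ R, (κ r t * monom (x t) r.1) • (cv r.2 - cv r.1)) t) :
    HasDerivAt (fun s => ∑ i ∈ Λ, (x s i * Real.log (x s i) - x s i))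
      (∑ r ∈ R, κ r t * monom (x t) r.1 *
        (Real.log (monS Λ (x t) r.2) - Real.log (monS Λ (x t) r.1))) t := by
  classical
  have hco : ∀ i : Fin N, HasDerivAt (fun s => x s i)
      ((∑ r ∈ R, (κ r t * monom (x t) r.1) • (cv r.2 - cv r.1)) i) t :=
    fun i => (hasDerivAt_pi.1 hD) i
  set d : Fin N → ℝ := ∑ r ∈ R, (κ r t * monom (x t) r.1) • (cv r.2 - cv r.1) with hddef
  have hterm : ∀ i ∈ Λ, HasDerivAt (fun s => x s i * Real.log (x s i) - x s i)
      (d i * Real.log (x t i)) t := by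
    intro i _
    have h1 := ((hco i).mul ((hco i).log (hx i).ne')).sub (hco i)
    refine HasDerivAt.congr_deriv h1 ?_
    have h3 : x t i * (d i / x t i) = d i := by
      rw [mul_div_assoc']
      rw [mul_comm]
      exact mul_div_cancel_right₀ _ (hx i).ne'
    linarith
  have hsum := HasDerivAt.fun_sum hterm
  have hval : (∑ r ∈ R, κ r t * monom (x t) r.1 *
      (Real.log (monS Λ (x t) r.2) - Real.log (monS Λ (x t) r.1)))
      = ∑ i ∈ Λ, d i * Real.log (x t i) := by
    have hdi : ∀ i, d i = ∑ r ∈ R, (κ r t * monom (x t) r.1) * (cv r.2 i - cv r.1 i) := by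
      intro i
      rw [hddef, Finset.sum_apply]
      apply Finset.sum_congr rfl
      intro r _
      simp [Pi.smul_apply, Pi.sub_apply, smul_eq_mul]
    calc (∑ r ∈ R, κ r t * monom (x t) r.1 *
          (Real.log (monS Λ (x t) r.2) - Real.log (monS Λ (x t) r.1)))
        = ∑ r ∈ R, ∑ i ∈ Λ, (κ r t * monom (x t) r.1) * (cv r.2 i - cv r.1 i)
            * Real.log (x t i) := by
          apply Finset.sum_congr rfl
          intro r _
          rw [log_monS Λ hx, log_monS Λ hx, ← Finset.sum_sub_distrib, Finset.mul_sum]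
          apply Finset.sum_congr rfl
          intro i _
          simp only [cv]
          ring
      _ = ∑ i ∈ Λ, ∑ r ∈ R, (κ r t * monom (x t) r.1) * (cv r.2 i - cv r.1 i)
            * Real.log (x t i) := Finset.sum_comm
      _ = ∑ i ∈ Λ, d i * Real.log (x t i) := by
          apply Finset.sum_congr rfl
          intro i _
          rw [hdi i, Finset.sum_mul]
  rw [hval]
  exact hsum

/-- For a weakly reversible, single-linkage-class *non-autonomous* mass-action system with
bounded kinetics, any bounded trajectory whose ω-limit set is entirely contained in the
boundary of the nonnegative orthant or entirely contained in the open orthant has no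
ω-limit point on the boundary, and the trajectory is persistent. -/
theorem stmt_10 {N : ℕ} (hN : 0 < N)
    (C : Finset (Fin N → ℕ)) (R : Finset ((Fin N → ℕ) × (Fin N → ℕ)))
    (hnet : IsNetwork C R) (hwr : WeaklyReversible R)
    (hsingle : ∀ y ∈ C, ∀ y' ∈ C, Relation.ReflTransGen (symStep R) y y')
    (κ : ((Fin N → ℕ) × (Fin N → ℕ)) → ℝ → ℝ) (η : ℝ) (hη : 0 < η)
    (hκ : ∀ r ∈ R, ∀ t : ℝ, 0 ≤ t → η < κ r t ∧ κ r t < 1 / η)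
    (x : ℝ → Fin N → ℝ) (x0 : Fin N → ℝ) (hx0 : x 0 = x0) (hx0pos : ∀ i, 0 < x0 i)
    (hpos : ∀ t : ℝ, 0 ≤ t → ∀ i, 0 < x t i)
    (hODE : ∀ t : ℝ, 0 ≤ t →
      HasDerivAt x (∑ r ∈ R, (κ r t * monom (x t) r.1) • (cv r.2 - cv r.1)) t)
    (hbdd : ∃ B : ℝ, ∀ t : ℝ, 0 ≤ t → ∀ i, x t i ≤ B)
    (hdich : (∀ z ∈ omegaSet x, (∀ i, 0 ≤ z i) ∧ ∃ i, z i = 0) ∨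
             (∀ z ∈ omegaSet x, ∀ i, 0 < z i)) :
    (∀ z ∈ omegaSet x, ¬ ((∀ i, 0 ≤ z i) ∧ ∃ i, z i = 0)) ∧
    (∀ i, 0 < Filter.liminf (fun t => x t i) atTop) := by
  classical
  obtain ⟨B₀, hB₀⟩ := hbdd
  set B : ℝ := max B₀ 1 with hBdef
  have hB1 : (1:ℝ) ≤ B := le_max_right _ _
  have hbddB : ∀ t : ℝ, 0 ≤ t → ∀ i, x t i ≤ B :=
    fun t ht i => le_trans (hB₀ t ht i) (le_max_left _ _)
  have hcase2 : ∀ z ∈ omegaSet x, ∀ i, 0 < z i := by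
    rcases hdich with h1 | h2
    · exfalso
      by_cases hC : C = ∅
      · -- no complexes: trajectory constant, interior ω-limit point
        have hR : R = ∅ := by
          rw [Finset.eq_empty_iff_forall_notMem]
          intro r hr
          have hmem := (hnet.1 r hr).1
          rw [hC] at hmem
          simp at hmem
        have hxconst : ∀ t, 0 ≤ t → ∀ i, x t i = x 0 i := by
          intro t ht i
          have hD : ∀ s, 0 ≤ s → HasDerivAt (fun u => x u i) 0 s := by
            intro s hs
            have hd := (hasDerivAt_pi.1 (hODE s hs)) i
            rw [hR] at hd
            simpa using hd
          exact aux_const_of_deriv_zero hD t ht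
        have hmem : x0 ∈ omegaSet x := by
          refine ⟨fun n => (n : ℝ), tendsto_natCast_atTop_atTop, ?_⟩
          have heq : ∀ n : ℕ, x (n : ℝ) = x0 := by
            intro n
            funext i
            rw [hxconst _ (Nat.cast_nonneg n) i, hx0]
          rw [show (fun n : ℕ => x (n : ℝ)) = fun _ => x0 from funext heq]
          exact tendsto_const_nhds
        obtain ⟨_, i, hi⟩ := h1 x0 hmem
        exact absurd hi (ne_of_gt (hx0pos i))
      have hCne : C.Nonempty := Finset.nonempty_iff_ne_empty.2 hC
      -- STEP A : Lyapunov decay for Λ = univ, convergence of the trajectory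
      have hzeroU : ∀ tn : ℕ → ℝ, Tendsto tn atTop atTop → ∀ z : Fin N → ℝ,
          Tendsto (fun n => x (tn n)) atTop (𝓝 z) →
            ∃ i ∈ (Finset.univ : Finset (Fin N)), z i = 0 := by
        intro tn htn z hxz
        obtain ⟨_, i, hi⟩ := h1 z ⟨tn, htn, hxz⟩
        exact ⟨i, Finset.mem_univ i, hi⟩
      obtain ⟨T, hT⟩ := tierLemma hN C R hnet hwr hsingle κ η hη hκ x hpos hODE B hB1 hbddB
        hCne Finset.univ 1 one_pos 0 (fun t _ i hi => absurd (Finset.mem_univ i) hi) hzeroU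
      set A : ℝ → ℝ := fun s => ∑ y ∈ C, monS Finset.univ (x s) y with hAdef
      have hApos : ∀ s, 0 ≤ s → 0 < A s := fun s hs =>
        Finset.sum_pos (fun y _ => monS_pos _ (hpos s hs) _) hCne
      have hxcont : ∀ s : ℝ, 0 ≤ s → ContinuousAt x s := fun s hs => (hODE s hs).continuousAt
      have hpoly : Continuous (fun u : Fin N → ℝ => ∑ y ∈ C, monS Finset.univ u y) := by
        apply continuous_finset_sum
        intro y _
        exact continuous_finset_prod _ (fun i _ => (continuous_apply i).pow _)
      have hAcont : ∀ s : ℝ, 0 ≤ s → ContinuousAt A s := fun s hs =>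
        (hpoly.continuousAt).comp (hxcont s hs)
      set T₂ : ℝ := max T 0 + 1 with hT₂def
      have hT₂pos : (0:ℝ) < T₂ := by
        have := le_max_right T (0:ℝ)
        rw [hT₂def]; linarith
      have hT₂T : T ≤ T₂ := by
        have := le_max_left T (0:ℝ)
        rw [hT₂def]; linarith
      set G : ℝ → ℝ := fun s => ∫ u in T₂..s, A u with hGdef
      have hGd : ∀ s : ℝ, 0 < s → HasDerivAt G (A s) s := by
        intro s hs
        apply intervalIntegral.integral_hasDerivAt_right
        · apply ContinuousOn.intervalIntegrable
          intro u hu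
          have hu0 : 0 ≤ u := by
            rcases Set.mem_uIcc.1 hu with ⟨h, _⟩ | ⟨h, _⟩
            · linarith
            · linarith
          exact (hAcont u hu0).continuousWithinAt
        · exact ContinuousOn.stronglyMeasurableAtFilter (isOpen_Ioi (a := (0:ℝ)))
            (fun u hu => (hAcont u (le_of_lt hu)).continuousWithinAt) s hs
        · exact hAcont s hs.le
      set W : ℝ → ℝ := fun s => ∑ i ∈ Finset.univ, (x s i * Real.log (x s i) - x s i)
        with hWdef
      have hWd : ∀ s : ℝ, 0 ≤ s → HasDerivAt W
          (∑ r ∈ R, κ r s * monom (x s) r.1 *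
            (Real.log (monS Finset.univ (x s) r.2) - Real.log (monS Finset.univ (x s) r.1))) s :=
        fun s hs => aux_hasDerivAt_W R κ x Finset.univ (hpos s hs) (hODE s hs)
      set F : ℝ → ℝ := fun s => W s + G s with hFdef
      have hFd : ∀ s : ℝ, T₂ ≤ s → HasDerivAt F
          ((∑ r ∈ R, κ r s * monom (x s) r.1 *
            (Real.log (monS Finset.univ (x s) r.2) - Real.log (monS Finset.univ (x s) r.1)))
            + A s) s :=
        fun s hs => (hWd s (le_trans hT₂pos.le hs)).add (hGd s (lt_of_lt_of_le hT₂pos hs))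
      have hFanti : AntitoneOn F (Set.Ici T₂) := by
        apply antitoneOn_of_deriv_nonpos (convex_Ici T₂)
        · exact fun s hs => ((hFd s hs).continuousAt).continuousWithinAt
        · intro s hs
          rw [interior_Ici] at hs
          exact (hFd s hs.le).differentiableAt.differentiableWithinAt
        · intro s hs
          rw [interior_Ici] at hs
          rw [(hFd s hs.le).deriv]
          have h1 := hT s (le_trans hT₂T hs.le)
          linarith
      have hWlb : ∀ s : ℝ, 0 ≤ s → -(N:ℝ) ≤ W s := by
        intro s hs
        have h1 : ∑ _i : Fin N, (-1 : ℝ) ≤ W s :=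
          Finset.sum_le_sum (fun i _ => aux_xlogx_ge (x s i) (hpos s hs i))
        simpa using h1
      have hGub : ∀ s, T₂ ≤ s → G s ≤ F T₂ + N := by
        intro s hs
        have h1 : F s ≤ F T₂ := hFanti Set.self_mem_Ici hs hs
        have h2 := hWlb s (le_trans hT₂pos.le hs)
        have h3 : G s = F s - W s := by rw [hFdef]; ring
        linarith
      have hGmono : MonotoneOn G (Set.Ici T₂) := by
        apply monotoneOn_of_deriv_nonneg (convex_Ici T₂)
        · exact fun s hs => ((hGd s (lt_of_lt_of_le hT₂pos hs)).continuousAt).continuousWithinAt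
        · intro s hs
          rw [interior_Ici] at hs
          exact (hGd s (lt_of_lt_of_le hT₂pos hs.le)).differentiableAt.differentiableWithinAt
        · intro s hs
          rw [interior_Ici] at hs
          rw [(hGd s (lt_of_lt_of_le hT₂pos hs.le)).deriv]
          exact (hApos s (le_trans hT₂pos.le hs.le)).le
      obtain ⟨L₀, hL₀⟩ := aux_tendsto_of_monotoneOn hGmono hGub
      -- coordinatewise convergence of x
      set dmax : ℕ := C.sup (fun y => ∑ i, y i) with hdmaxdef
      set K : ℝ := (R.card : ℝ) * (dmax : ℝ) / η + 1 with hKdef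
      have hKpos : 0 < K := by positivity
      have hdmax_bound : ∀ y ∈ C, ∀ i, (y i : ℝ) ≤ (dmax : ℝ) := by
        intro y hy i
        have h1 : y i ≤ ∑ j, y j :=
          Finset.single_le_sum (fun j _ => Nat.zero_le _) (Finset.mem_univ i)
        have h2 : (∑ j, y j) ≤ dmax := Finset.le_sup hy
        exact_mod_cast le_trans h1 h2
      have hdlow : ∀ s : ℝ, 0 ≤ s → ∀ i,
          -(K * A s) ≤ (∑ r ∈ R, (κ r s * monom (x s) r.1) • (cv r.2 - cv r.1)) i := by
        intro s hs i
        have hcoord : (∑ r ∈ R, (κ r s * monom (x s) r.1) • (cv r.2 - cv r.1)) i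
            = ∑ r ∈ R, (κ r s * monom (x s) r.1) * (cv r.2 i - cv r.1 i) := by
          rw [Finset.sum_apply]
          apply Finset.sum_congr rfl
          intro r _
          simp [Pi.smul_apply, Pi.sub_apply, smul_eq_mul]
        rw [hcoord]
        have hper : ∀ r ∈ R, -(((dmax:ℝ)/η) * A s)
            ≤ (κ r s * monom (x s) r.1) * (cv r.2 i - cv r.1 i) := by
          intro r hr
          obtain ⟨hκ1, hκ2⟩ := hκ r hr s hs
          have hκp : 0 < κ r s := lt_trans hη hκ1
          have hmono : 0 < monom (x s) r.1 :=
            Finset.prod_pos fun j _ => pow_pos (hpos s hs j) _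
          have hmle : monom (x s) r.1 ≤ A s := by
            have : monS Finset.univ (x s) r.1 ≤ A s :=
              Finset.single_le_sum (fun y _ => (monS_pos _ (hpos s hs) y).le)
                (hnet.1 r hr).1
            exact this
          have hcv2 : -(dmax:ℝ) ≤ cv r.2 i - cv r.1 i := by
            have h5 := hdmax_bound r.1 (hnet.1 r hr).1 i
            have h0 : (0:ℝ) ≤ cv r.2 i := Nat.cast_nonneg _
            simp only [cv] at h0 ⊢
            linarith
          have h3 : (κ r s * monom (x s) r.1) * (-(dmax:ℝ))
              ≤ (κ r s * monom (x s) r.1) * (cv r.2 i - cv r.1 i) :=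
            mul_le_mul_of_nonneg_left hcv2 (mul_pos hκp hmono).le
          have h4 : κ r s * monom (x s) r.1 ≤ (1/η) * A s :=
            mul_le_mul hκ2.le hmle hmono.le (by positivity)
          have h6 := mul_le_mul_of_nonneg_right h4 (Nat.cast_nonneg dmax : (0:ℝ) ≤ (dmax:ℝ))
          calc -(((dmax:ℝ)/η) * A s) = -((1/η) * A s * (dmax:ℝ)) := by ring
            _ ≤ -(κ r s * monom (x s) r.1 * (dmax:ℝ)) := neg_le_neg h6
            _ = (κ r s * monom (x s) r.1) * (-(dmax:ℝ)) := by ring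
            _ ≤ _ := h3
        have hsum := Finset.sum_le_sum hper
        rw [Finset.sum_const, nsmul_eq_mul] at hsum
        have hA := hApos s hs
        calc -(K * A s) = (R.card:ℝ) * (-(((dmax:ℝ)/η) * A s)) - A s := by rw [hKdef]; ring
          _ ≤ (R.card:ℝ) * (-(((dmax:ℝ)/η) * A s)) := sub_le_self _ hA.le
          _ ≤ _ := hsum
      have hconv : ∀ i, ∃ Li : ℝ, Tendsto (fun s => x s i + K * G s) atTop (𝓝 Li) := by
        intro i
        have hmon : MonotoneOn (fun s => x s i + K * G s) (Set.Ici T₂) := by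
          apply monotoneOn_of_deriv_nonneg (convex_Ici T₂)
          · intro s hs
            have hds := ((hasDerivAt_pi.1 (hODE s (le_trans hT₂pos.le hs))) i).add
              ((hGd s (lt_of_lt_of_le hT₂pos hs)).const_mul K)
            exact hds.continuousAt.continuousWithinAt
          · intro s hs
            rw [interior_Ici] at hs
            have hds := ((hasDerivAt_pi.1 (hODE s (le_trans hT₂pos.le hs.le))) i).add
              ((hGd s (lt_of_lt_of_le hT₂pos hs.le)).const_mul K)
            exact hds.differentiableAt.differentiableWithinAt
          · intro s hs
            rw [interior_Ici] at hs
            have hds := ((hasDerivAt_pi.1 (hODE s (le_trans hT₂pos.le hs.le))) i).add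
              ((hGd s (lt_of_lt_of_le hT₂pos hs.le)).const_mul K)
            rw [show deriv (fun s => x s i + K * G s) s = _ from hds.deriv]
            have := hdlow s (le_trans hT₂pos.le hs.le) i
            linarith
        apply aux_tendsto_of_monotoneOn hmon (M := B + K * (F T₂ + N))
        intro s hs
        have h1 : x s i ≤ B := hbddB s (le_trans hT₂pos.le hs) i
        have h2 : K * G s ≤ K * (F T₂ + N) :=
          mul_le_mul_of_nonneg_left (hGub s hs) hKpos.le
        linarith
      choose L hL using hconv
      set zstar : Fin N → ℝ := fun i => L i - K * L₀ with hzsdef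
      have hxi : ∀ i, Tendsto (fun s => x s i) atTop (𝓝 (zstar i)) := by
        intro i
        have h := (hL i).sub (hL₀.const_mul K)
        have heq : zstar i = L i - K * L₀ := by rw [hzsdef]
        rw [heq]
        exact h.congr (fun s => by ring)
      have hxzstar : Tendsto x atTop (𝓝 zstar) := tendsto_pi_nhds.2 hxi
      have hzstarmem : zstar ∈ omegaSet x :=
        ⟨fun n => (n : ℝ), tendsto_natCast_atTop_atTop,
          hxzstar.comp tendsto_natCast_atTop_atTop⟩
      -- STEP B : Lyapunov for the vanishing species
      obtain ⟨hzsnn, izero, hizero⟩ := h1 zstar hzstarmem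
      set Λs : Finset (Fin N) := Finset.univ.filter (fun i => zstar i = 0) with hΛdef
      have hΛmem : izero ∈ Λs := Finset.mem_filter.2 ⟨Finset.mem_univ _, hizero⟩
      have hzpos : ∀ i, i ∉ Λs → 0 < zstar i := by
        intro i hi
        rcases (hzsnn i).lt_or_eq with h | h
        · exact h
        · exact absurd (show i ∈ Λs from Finset.mem_filter.2 ⟨Finset.mem_univ i, h.symm⟩) hi
      have hlowS : ∃ c₁ : ℝ, 0 < c₁ ∧ ∃ T₃ : ℝ, ∀ t, T₃ ≤ t → ∀ i, i ∉ Λs → c₁ ≤ x t i := by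
        set Sc : Finset (Fin N) := Finset.univ.filter (fun i => i ∉ Λs) with hScdef
        have hev : ∀ᶠ t in atTop, ∀ i ∈ Sc, zstar i / 2 ≤ x t i := by
          rw [eventually_all_finset]
          intro i hi
          have hipos : 0 < zstar i := hzpos i (Finset.mem_filter.1 hi).2
          exact (hxi i).eventually (eventually_ge_nhds (half_lt_self hipos))
        obtain ⟨T₃, hT₃⟩ := eventually_atTop.1 hev
        by_cases hSc : Sc.Nonempty
        · refine ⟨Sc.inf' hSc (fun i => zstar i / 2), ?_, T₃, ?_⟩
          · rw [Finset.lt_inf'_iff]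
            intro i hi
            exact half_pos (hzpos i (Finset.mem_filter.1 hi).2)
          · intro t ht i hi
            have hiSc : i ∈ Sc := Finset.mem_filter.2 ⟨Finset.mem_univ _, hi⟩
            exact le_trans (Finset.inf'_le _ hiSc) (hT₃ t ht i hiSc)
        · refine ⟨1, one_pos, T₃, ?_⟩
          intro t ht i hi
          rw [Finset.not_nonempty_iff_eq_empty] at hSc
          have : i ∈ Sc := Finset.mem_filter.2 ⟨Finset.mem_univ _, hi⟩
          rw [hSc] at this
          simp at this
      obtain ⟨c₁, hc₁, T₃, hT₃low⟩ := hlowS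
      have hzeroS : ∀ tn : ℕ → ℝ, Tendsto tn atTop atTop → ∀ z : Fin N → ℝ,
          Tendsto (fun n => x (tn n)) atTop (𝓝 z) → ∃ i ∈ Λs, z i = 0 := by
        intro tn htn z hxz
        have hzz : z = zstar := tendsto_nhds_unique hxz (hxzstar.comp htn)
        exact ⟨izero, hΛmem, by rw [hzz]; exact hizero⟩
      obtain ⟨T₄, hT₄⟩ := tierLemma hN C R hnet hwr hsingle κ η hη hκ x hpos hODE B hB1 hbddB
        hCne Λs c₁ hc₁ T₃ hT₃low hzeroS
      set T₅ : ℝ := max T₄ 0 + 1 with hT₅def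
      have hT₅pos : (0:ℝ) < T₅ := by
        have := le_max_right T₄ (0:ℝ)
        rw [hT₅def]; linarith
      have hT₅T : T₄ ≤ T₅ := by
        have := le_max_left T₄ (0:ℝ)
        rw [hT₅def]; linarith
      set WS : ℝ → ℝ := fun s => ∑ i ∈ Λs, (x s i * Real.log (x s i) - x s i) with hWSdef
      have hWSd : ∀ s : ℝ, 0 ≤ s → HasDerivAt WS
          (∑ r ∈ R, κ r s * monom (x s) r.1 *
            (Real.log (monS Λs (x s) r.2) - Real.log (monS Λs (x s) r.1))) s :=
        fun s hs => aux_hasDerivAt_W R κ x Λs (hpos s hs) (hODE s hs)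
      have hASpos : ∀ s : ℝ, 0 ≤ s → 0 < ∑ y ∈ C, monS Λs (x s) y := fun s hs =>
        Finset.sum_pos (fun y _ => monS_pos _ (hpos s hs) _) hCne
      have hanti : AntitoneOn WS (Set.Ici T₅) := by
        apply antitoneOn_of_deriv_nonpos (convex_Ici T₅)
        · exact fun s hs => ((hWSd s (le_trans hT₅pos.le hs)).continuousAt).continuousWithinAt
        · intro s hs
          rw [interior_Ici] at hs
          exact (hWSd s (le_trans hT₅pos.le hs.le)).differentiableAt.differentiableWithinAt
        · intro s hs
          rw [interior_Ici] at hs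
          rw [(hWSd s (le_trans hT₅pos.le hs.le)).deriv]
          have h1 := hT₄ s (le_trans hT₅T hs.le)
          have h2 := hASpos s (le_trans hT₅pos.le hs.le)
          linarith
      have hWS0 : Tendsto WS atTop (𝓝 0) := by
        have h1 : Tendsto WS atTop (𝓝 (∑ _i ∈ Λs, (0:ℝ))) := by
          apply tendsto_finset_sum
          intro i hi
          have hz0 : zstar i = 0 := (Finset.mem_filter.1 hi).2
          have hxi0 : Tendsto (fun s => x s i) atTop (𝓝 0) := by
            have := hxi i; rwa [hz0] at this
          have hxpos : ∀ᶠ s in atTop, 0 < x s i := by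
            filter_upwards [eventually_ge_atTop (0:ℝ)] with s hs using hpos s hs i
          have hlog := aux_tendsto_xlogx hxpos hxi0
          have := hlog.sub hxi0
          simpa using this
        simpa using h1
      have hev1 : ∀ᶠ s in atTop, ∀ i ∈ Λs, x s i < 1 := by
        rw [eventually_all_finset]
        intro i hi
        have hz0 : zstar i = 0 := (Finset.mem_filter.1 hi).2
        have hxi0 : Tendsto (fun s => x s i) atTop (𝓝 0) := by
          have := hxi i; rwa [hz0] at this
        exact hxi0.eventually (eventually_lt_nhds one_pos)
      obtain ⟨s₀, hs₀T, hs₀lt, hs₀0⟩ :=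
        ((eventually_ge_atTop T₅).and (hev1.and (eventually_ge_atTop (0:ℝ)))).exists
      have hWneg : WS s₀ < 0 := by
        have hne : Λs.Nonempty := ⟨izero, hΛmem⟩
        rw [hWSdef]
        apply Finset.sum_neg _ hne
        intro i hi
        have hxp := hpos s₀ hs₀0 i
        have hx1 := hs₀lt i hi
        have hlogneg := Real.log_neg hxp hx1
        nlinarith
      have hWle : ∀ᶠ s in atTop, WS s ≤ WS s₀ := by
        filter_upwards [eventually_ge_atTop s₀] with s hs
        exact hanti (Set.mem_Ici.2 hs₀T) (Set.mem_Ici.2 (le_trans hs₀T hs)) hs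
      have hge := le_of_tendsto hWS0 hWle
      linarith
    · exact h2
  constructor
  · intro z hz hbad
    obtain ⟨_, i, hzi⟩ := hbad
    exact absurd hzi (ne_of_gt (hcase2 z hz i))
  · intro i
    have hevε : ∃ ε : ℝ, 0 < ε ∧ ∀ᶠ t in atTop, ε ≤ x t i := by
      by_contra hno
      push_neg at hno
      have hfr : ∀ n : ℕ, ∃ t ≥ (n:ℝ), x t i < 1 / ((n:ℝ) + 1) := by
        intro n
        have h := hno (1 / ((n:ℝ) + 1)) (by positivity)
        have h2 : ∃ᶠ t in atTop, x t i < 1 / ((n:ℝ)+1) := h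
        exact Filter.frequently_atTop.1 h2 n
      choose tn htn1 htn2 using hfr
      have htn0 : ∀ n, (0:ℝ) ≤ tn n := fun n => le_trans (Nat.cast_nonneg n) (htn1 n)
      have htnTop : Tendsto tn atTop atTop :=
        tendsto_atTop_mono htn1 tendsto_natCast_atTop_atTop
      obtain ⟨z, hzbox, φ, hφ, hxz⟩ := aux_box 0 B (fun n => x (tn n))
        (fun n j => ⟨(hpos _ (htn0 n) j).le, hbddB _ (htn0 n) j⟩)
      have hzmem : z ∈ omegaSet x :=
        ⟨fun n => tn (φ n), htnTop.comp hφ.tendsto_atTop, hxz⟩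
      have hzi : z i ≤ 0 := by
        have hxic := tendsto_pi_nhds.1 hxz i
        have hub : Tendsto (fun n => 1 / ((φ n : ℝ) + 1)) atTop (𝓝 0) :=
          tendsto_one_div_add_atTop_nhds_zero_nat.comp hφ.tendsto_atTop
        exact le_of_tendsto_of_tendsto' hxic hub (fun n => (htn2 (φ n)).le)
      exact absurd (hcase2 z hzmem i) (not_lt.2 hzi)
    obtain ⟨ε, hε, hev⟩ := hevε
    have hbd : Filter.IsBoundedUnder (· ≤ ·) atTop (fun t => x t i) := by
      refine ⟨B, ?_⟩
      rw [Filter.eventually_map]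
      filter_upwards [eventually_ge_atTop (0:ℝ)] with t ht using hbddB t ht i
    calc (0:ℝ) < ε := hε
      _ ≤ Filter.liminf (fun t => x t i) atTop :=
        Filter.le_liminf_of_le hbd.isCoboundedUnder_ge hev
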